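/- Let K be a field and let I ⊆ K[t_1,t_2,t_3,t_4] be the ideal generated by g_1 = t_1t_2 - t_3t_4, g_2 = t_1t_3 - t_2t_4, g_3 = t_2t_3 - t_1t_4. Then G = {t_2t_3 - t_1t_4, t_1t_3 - t_2t_4, t_1t_2 - t_3t_4, t_2²t_4 - t_3²t_4, t_1²t_4 - t_3²t_4, t_3³t_4 - t_3t_4³} is a Gröbner basis of I with respect to the graded reverse lexicographic order. -/

import Mathlib

open MvPolynomial

/-- Total degree of an exponent vector. -/
def totDeg {s : ℕ} (a : Fin s →₀ ℕ) : ℕ := a.sum fun _ e => e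

/-- The graded reverse lexicographic order on exponent vectors, with
`t_1 > t_2 > ⋯ > t_s` (variables indexed by `Fin s` in that order):
`a ≺ b` iff `deg a < deg b`, or the degrees agree and the last coordinate
in which `a` and `b` differ is larger in `a`. -/
def grevlexLT {s : ℕ} (a b : Fin s →₀ ℕ) : Prop :=
  totDeg a < totDeg b ∨
    (totDeg a = totDeg b ∧ ∃ i : Fin s, b i < a i ∧ ∀ j : Fin s, i < j → a j = b j)

/-- `a` is the leading exponent (exponent of the leading term) of `f` w.r.t. GRevLex. -/
def IsLeadExp {K : Type} [Field K] {s : ℕ} (f : MvPolynomial (Fin s) K)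
    (a : Fin s →₀ ℕ) : Prop :=
  a ∈ f.support ∧ ∀ b ∈ f.support, b ≠ a → grevlexLT b a

/-- `G` is a Gröbner basis of `I` w.r.t. GRevLex: `G` generates `I` and the leading
term of every nonzero element of `I` is divisible by the leading term of some
element of `G`. -/
def IsGroebnerBasis {K : Type} [Field K] {s : ℕ}
    (G : Set (MvPolynomial (Fin s) K)) (I : Ideal (MvPolynomial (Fin s) K)) : Prop :=
  G ⊆ I ∧ Ideal.span G = I ∧
  ∀ f ∈ I, f ≠ 0 → ∀ a, IsLeadExp f a →
    ∃ g ∈ G, g ≠ 0 ∧ ∃ b, IsLeadExp g b ∧ b ≤ a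

def std4 (a b c d : ℕ) : Prop :=
  ¬(1 ≤ b ∧ 1 ≤ c) ∧ ¬(1 ≤ a ∧ 1 ≤ c) ∧ ¬(1 ≤ a ∧ 1 ≤ b) ∧
  ¬(2 ≤ b ∧ 1 ≤ d) ∧ ¬(2 ≤ a ∧ 1 ≤ d) ∧ ¬(3 ≤ c ∧ 1 ≤ d)

instance std4.dec (a b c d : ℕ) : Decidable (std4 a b c d) := by
  unfold std4; infer_instance

def core4 (a b c d : ℕ) : ℕ × ℕ × ℕ × ℕ :=
  if (a + b) % 2 = 0 ∧ (a + c) % 2 = 0 then (0, 0, 2, a + b + c + d - 2)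
  else if (b + c) % 2 = 0 then (1, 0, 0, a + b + c + d - 1)
  else if (a + c) % 2 = 0 then (0, 1, 0, a + b + c + d - 1)
  else (0, 0, 1, a + b + c + d - 1)

def nf4 (a b c d : ℕ) : ℕ × ℕ × ℕ × ℕ :=
  if std4 a b c d then (a, b, c, d) else core4 a b c d

lemma core4_rel1 (a b c d : ℕ) : core4 (a+1) (b+1) c d = core4 a b (c+1) (d+1) := by
  unfold core4; split_ifs <;> simp only [Prod.mk.injEq, true_and, and_true] <;> omega

lemma core4_rel2 (a b c d : ℕ) : core4 (a+1) b (c+1) d = core4 a (b+1) c (d+1) := by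
  unfold core4; split_ifs <;> simp only [Prod.mk.injEq, true_and, and_true] <;> omega

lemma core4_rel3 (a b c d : ℕ) : core4 a (b+1) (c+1) d = core4 (a+1) b c (d+1) := by
  unfold core4; split_ifs <;> simp only [Prod.mk.injEq, true_and, and_true] <;> omega

lemma nf4_eq_core4 {a b c d : ℕ} (h : ¬ std4 a b c d) : nf4 a b c d = core4 a b c d := by
  unfold nf4; rw [if_neg h]

lemma nf4_std {a b c d : ℕ} (h : std4 a b c d) : nf4 a b c d = (a, b, c, d) := by
  unfold nf4; rw [if_pos h]

lemma nf4_rel1 (a b c d : ℕ) : nf4 (a+1) (b+1) c d = nf4 a b (c+1) (d+1) := by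
  have hL : ¬ std4 (a+1) (b+1) c d := by unfold std4; omega
  rw [nf4_eq_core4 hL]
  by_cases hR : std4 a b (c+1) (d+1)
  · rw [nf4_std hR]
    have ha : a = 0 := by revert hR; unfold std4; omega
    have hb : b = 0 := by revert hR; unfold std4; omega
    have hc : c ≤ 1 := by revert hR; unfold std4; omega
    subst ha hb
    interval_cases c <;> simp [core4, Prod.ext_iff] <;> omega
  · rw [nf4_eq_core4 hR, core4_rel1]

lemma nf4_rel2 (a b c d : ℕ) : nf4 (a+1) b (c+1) d = nf4 a (b+1) c (d+1) := by
  have hL : ¬ std4 (a+1) b (c+1) d := by unfold std4; omega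
  rw [nf4_eq_core4 hL]
  by_cases hR : std4 a (b+1) c (d+1)
  · rw [nf4_std hR]
    have ha : a = 0 := by revert hR; unfold std4; omega
    have hb : b = 0 := by revert hR; unfold std4; omega
    have hc : c = 0 := by revert hR; unfold std4; omega
    subst ha hb hc
    simp [core4, Prod.ext_iff]; omega
  · rw [nf4_eq_core4 hR, core4_rel2]

lemma nf4_rel3 (a b c d : ℕ) : nf4 a (b+1) (c+1) d = nf4 (a+1) b c (d+1) := by
  have hL : ¬ std4 a (b+1) (c+1) d := by unfold std4; omega
  rw [nf4_eq_core4 hL]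
  by_cases hR : std4 (a+1) b c (d+1)
  · rw [nf4_std hR]
    have ha : a = 0 := by revert hR; unfold std4; omega
    have hb : b = 0 := by revert hR; unfold std4; omega
    have hc : c = 0 := by revert hR; unfold std4; omega
    subst ha hb hc
    simp [core4, Prod.ext_iff]; omega
  · rw [nf4_eq_core4 hR, core4_rel3]

lemma nf4_dec {a b c d : ℕ} (h : ¬ std4 a b c d) :
    ((nf4 a b c d).1 + (nf4 a b c d).2.1 + (nf4 a b c d).2.2.1 + (nf4 a b c d).2.2.2
      = a + b + c + d) ∧
    (d < (nf4 a b c d).2.2.2 ∨ ((nf4 a b c d).2.2.2 = d ∧ c < (nf4 a b c d).2.2.1)) := by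
  rw [nf4_eq_core4 h]
  revert h; unfold std4 core4
  split_ifs <;> simp only [Prod.mk.injEq, true_and, and_true] <;> intro h <;> omega

noncomputable def pk (q : ℕ × ℕ × ℕ × ℕ) : Fin 4 →₀ ℕ :=
  Finsupp.single 0 q.1 + Finsupp.single 1 q.2.1 + Finsupp.single 2 q.2.2.1 +
    Finsupp.single 3 q.2.2.2

lemma pk_apply0 (q : ℕ × ℕ × ℕ × ℕ) : pk q 0 = q.1 := by
  simp [pk, Finsupp.single_apply]
lemma pk_apply1 (q : ℕ × ℕ × ℕ × ℕ) : pk q 1 = q.2.1 := by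
  simp [pk, Finsupp.single_apply]
lemma pk_apply2 (q : ℕ × ℕ × ℕ × ℕ) : pk q 2 = q.2.2.1 := by
  simp [pk, Finsupp.single_apply]
lemma pk_apply3 (q : ℕ × ℕ × ℕ × ℕ) : pk q 3 = q.2.2.2 := by
  simp [pk, Finsupp.single_apply]

lemma pk_tup (m : Fin 4 →₀ ℕ) : pk (m 0, m 1, m 2, m 3) = m := by
  ext i
  fin_cases i
  · exact pk_apply0 _
  · exact pk_apply1 _
  · exact pk_apply2 _
  · exact pk_apply3 _

lemma totDeg_apply (m : Fin 4 →₀ ℕ) : totDeg m = m 0 + m 1 + m 2 + m 3 := by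
  rw [totDeg, Finsupp.sum_fintype]
  · exact Fin.sum_univ_four m
  · intro _; rfl

lemma grevlex_irrefl (a : Fin 4 →₀ ℕ) : ¬ grevlexLT a a := by
  rintro (h | ⟨-, i, hi, -⟩)
  · exact lt_irrefl _ h
  · exact lt_irrefl _ hi

lemma grevlex_trans {a b c : Fin 4 →₀ ℕ} (h1 : grevlexLT a b) (h2 : grevlexLT b c) :
    grevlexLT a c := by
  rcases h1 with h1 | ⟨e1, i, hi, ti⟩
  · rcases h2 with h2 | ⟨e2, _⟩
    · exact Or.inl (h1.trans h2)
    · exact Or.inl (e2 ▸ h1)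
  · rcases h2 with h2 | ⟨e2, j, hj, tj⟩
    · exact Or.inl (e1 ▸ h2)
    · refine Or.inr ⟨e1.trans e2, ?_⟩
      rcases lt_trichotomy i j with hij | hij | hij
      · exact ⟨j, by rw [ti j hij]; exact ⟨hj, fun k hk => (ti k (hij.trans hk)).trans (tj k hk)⟩⟩
      · subst hij
        exact ⟨i, lt_trans hj hi, fun k hk => (ti k hk).trans (tj k hk)⟩
      · exact ⟨i, by rw [← tj i hij]; exact ⟨hi, fun k hk => (ti k hk).trans (tj k (hij.trans hk))⟩⟩

noncomputable def NF (m : Fin 4 →₀ ℕ) : Fin 4 →₀ ℕ := pk (nf4 (m 0) (m 1) (m 2) (m 3))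

lemma NF_std {m : Fin 4 →₀ ℕ} (h : std4 (m 0) (m 1) (m 2) (m 3)) : NF m = m := by
  rw [NF, nf4_std h, pk_tup]

lemma add2_apply (m : Fin 4 →₀ ℕ) (i j k : Fin 4) :
    (m + (Finsupp.single i 1 + Finsupp.single j 1) : Fin 4 →₀ ℕ) k
      = m k + ((if i = k then 1 else 0) + (if j = k then 1 else 0)) := by
  simp [Finsupp.single_apply]

lemma NF_rel1 (m : Fin 4 →₀ ℕ) :
    NF (m + (Finsupp.single 0 1 + Finsupp.single 1 1))
      = NF (m + (Finsupp.single 2 1 + Finsupp.single 3 1)) := by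
  unfold NF
  simp only [add2_apply]
  norm_num [Fin.ext_iff]
  exact congrArg pk (nf4_rel1 (m 0) (m 1) (m 2) (m 3))

lemma NF_rel2 (m : Fin 4 →₀ ℕ) :
    NF (m + (Finsupp.single 0 1 + Finsupp.single 2 1))
      = NF (m + (Finsupp.single 1 1 + Finsupp.single 3 1)) := by
  unfold NF
  simp only [add2_apply]
  norm_num [Fin.ext_iff]
  exact congrArg pk (nf4_rel2 (m 0) (m 1) (m 2) (m 3))

lemma NF_rel3 (m : Fin 4 →₀ ℕ) :
    NF (m + (Finsupp.single 1 1 + Finsupp.single 2 1))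
      = NF (m + (Finsupp.single 0 1 + Finsupp.single 3 1)) := by
  unfold NF
  simp only [add2_apply]
  norm_num [Fin.ext_iff]
  exact congrArg pk (nf4_rel3 (m 0) (m 1) (m 2) (m 3))

lemma NF_lt {m : Fin 4 →₀ ℕ} (h : ¬ std4 (m 0) (m 1) (m 2) (m 3)) : grevlexLT (NF m) m := by
  obtain ⟨hdeg, hcases⟩ := nf4_dec h
  have hd : totDeg (NF m) = totDeg m := by
    rw [totDeg_apply, totDeg_apply, NF, pk_apply0, pk_apply1, pk_apply2, pk_apply3, hdeg]
  rcases hcases with h3 | ⟨h3, h2⟩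
  · refine Or.inr ⟨hd, 3, ?_, ?_⟩
    · rw [NF, pk_apply3]; exact h3
    · intro j hj
      exfalso; fin_cases j <;> exact absurd hj (by decide)
  · refine Or.inr ⟨hd, 2, ?_, ?_⟩
    · rw [NF, pk_apply2]; exact h2
    · intro j hj
      fin_cases j
      · exact absurd hj (by decide)
      · exact absurd hj (by decide)
      · exact absurd hj (by decide)
      · show (pk (nf4 (m 0) (m 1) (m 2) (m 3))) 3 = m 3
        rw [pk_apply3]; exact h3

noncomputable def piNF {K : Type} [Field K] (f : MvPolynomial (Fin 4) K) :
    MvPolynomial (Fin 4) K :=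
  AddMonoidAlgebra.ofCoeff (Finsupp.mapDomain.addMonoidHom NF (AddMonoidAlgebra.coeff f))

lemma piNF_monomial {K : Type} [Field K] (u : Fin 4 →₀ ℕ) (c : K) :
    piNF (monomial u c) = monomial (NF u) c := by
  rw [piNF, ← single_eq_monomial, ← single_eq_monomial]
  exact congrArg AddMonoidAlgebra.ofCoeff Finsupp.mapDomain_single

lemma piNF_add {K : Type} [Field K] (f g : MvPolynomial (Fin 4) K) :
    piNF (f + g) = piNF f + piNF g :=
  congrArg AddMonoidAlgebra.ofCoeff (map_add (Finsupp.mapDomain.addMonoidHom NF) _ _)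

lemma piNF_sub {K : Type} [Field K] (f g : MvPolynomial (Fin 4) K) :
    piNF (f - g) = piNF f - piNF g :=
  congrArg AddMonoidAlgebra.ofCoeff (map_sub (Finsupp.mapDomain.addMonoidHom NF) _ _)

lemma piNF_key {K : Type} [Field K] (u v : Fin 4 →₀ ℕ)
    (huv : ∀ m : Fin 4 →₀ ℕ, NF (m + u) = NF (m + v)) (p : MvPolynomial (Fin 4) K) :
    piNF (p * (monomial u 1 - monomial v 1)) = 0 := by
  induction p using MvPolynomial.induction_on' with
  | monomial m c =>
      rw [mul_sub, monomial_mul, monomial_mul,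
        piNF_sub, piNF_monomial, piNF_monomial, huv m]
      rw [sub_self]
  | add p q hp hq =>
      rw [add_mul, piNF_add, hp, hq, add_zero]

lemma binom_ne_zero {K : Type} [Field K] (u v : Fin 4 →₀ ℕ) (hne : v ≠ u) :
    (monomial u (1:K) - monomial v 1) ≠ 0 := by
  intro h
  have h2 := congrArg (MvPolynomial.coeff u) h
  rw [coeff_sub, coeff_monomial, coeff_monomial, if_pos rfl, if_neg hne, coeff_zero] at h2
  simpa using h2

lemma isLead_binomial {K : Type} [Field K] (u v : Fin 4 →₀ ℕ) (hne : v ≠ u)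
    (hlt : grevlexLT v u) :
    IsLeadExp (monomial u (1:K) - monomial v 1) u := by
  constructor
  · rw [MvPolynomial.mem_support_iff, coeff_sub, coeff_monomial, coeff_monomial,
      if_pos rfl, if_neg hne]
    simpa using one_ne_zero
  · intro b hb hbne
    rw [MvPolynomial.mem_support_iff, coeff_sub, coeff_monomial, coeff_monomial] at hb
    by_cases h1 : u = b
    · exact absurd h1.symm hbne
    · rw [if_neg h1] at hb
      by_cases h2 : v = b
      · subst h2; exact hlt
      · rw [if_neg h2] at hb; simp at hb

lemma XpXp {K : Type} [Field K] (i j : Fin 4) (k l : ℕ) :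
    (X i ^ k * X j ^ l : MvPolynomial (Fin 4) K)
      = monomial (Finsupp.single i k + Finsupp.single j l) 1 := by
  rw [X_pow_eq_monomial, X_pow_eq_monomial, monomial_mul, one_mul]

lemma XX {K : Type} [Field K] (i j : Fin 4) :
    (X i * X j : MvPolynomial (Fin 4) K)
      = monomial (Finsupp.single i 1 + Finsupp.single j 1) 1 := by
  rw [← pow_one (X i : MvPolynomial (Fin 4) K), ← pow_one (X j : MvPolynomial (Fin 4) K), XpXp]

lemma piNF_span {K : Type} [Field K] {f : MvPolynomial (Fin 4) K}
    (hf : f ∈ Ideal.span {X 0 * X 1 - X 2 * X 3, X 0 * X 2 - X 1 * X 3,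
      X 1 * X 2 - X 0 * X 3}) : piNF f = 0 := by
  obtain ⟨p1, z1, hz1, rfl⟩ := Ideal.mem_span_insert.mp hf
  obtain ⟨p2, z2, hz2, rfl⟩ := Ideal.mem_span_insert.mp hz1
  obtain ⟨p3, rfl⟩ := Ideal.mem_span_singleton'.mp hz2
  rw [piNF_add, piNF_add]
  rw [XX 0 1, XX 2 3, XX 0 2, XX 1 3, XX 1 2, XX 0 3]
  rw [piNF_key _ _ NF_rel1 p1, piNF_key _ _ NF_rel2 p2, piNF_key _ _ NF_rel3 p3]
  simp

lemma piNF_coeff_eq {K : Type} [Field K] (f : MvPolynomial (Fin 4) K) (a : Fin 4 →₀ ℕ)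
    (h : ∀ m : Fin 4 →₀ ℕ, m ∈ f.support → m ≠ a → NF m ≠ a) (hstd : NF a = a) :
    MvPolynomial.coeff a (piNF f) = MvPolynomial.coeff a f := by
  classical
  have h1 : AddMonoidAlgebra.coeff (piNF f) = Finsupp.mapDomain NF (AddMonoidAlgebra.coeff f) := rfl
  have h2 : (Finsupp.mapDomain NF (AddMonoidAlgebra.coeff f)) a = (AddMonoidAlgebra.coeff f).sum fun m c => Finsupp.single (NF m) c a := by
    rw [Finsupp.mapDomain, Finsupp.sum_apply]
  have h3 : MvPolynomial.coeff a (piNF f) = (AddMonoidAlgebra.coeff f).sum fun m c => Finsupp.single (NF m) c a := by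
    rw [← h2, ← h1]; rfl
  rw [h3, Finsupp.sum_eq_single a]
  · rw [hstd, Finsupp.single_eq_same]; rfl
  · intro b hb hba
    exact Finsupp.single_eq_of_ne (h b (Finsupp.mem_support_iff.mpr hb) hba).symm
  · simp


set_option maxHeartbeats 3000000 in
/-- The set `{t_2t_3 - t_1t_4, t_1t_3 - t_2t_4, t_1t_2 - t_3t_4, t_2²t_4 - t_3²t_4,
t_1²t_4 - t_3²t_4, t_3³t_4 - t_3t_4³}` is a Gröbner basis, w.r.t. GRevLex, of the ideal
generated by `t_1t_2 - t_3t_4, t_1t_3 - t_2t_4, t_2t_3 - t_1t_4`. -/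
theorem stmt5 {K : Type} [Field K] :
    IsGroebnerBasis
      ({X 1 * X 2 - X 0 * X 3, X 0 * X 2 - X 1 * X 3, X 0 * X 1 - X 2 * X 3,
        X 1 ^ 2 * X 3 - X 2 ^ 2 * X 3, X 0 ^ 2 * X 3 - X 2 ^ 2 * X 3,
        X 2 ^ 3 * X 3 - X 2 * X 3 ^ 3} : Set (MvPolynomial (Fin 4) K))
      (Ideal.span {X 0 * X 1 - X 2 * X 3, X 0 * X 2 - X 1 * X 3, X 1 * X 2 - X 0 * X 3}) := by
  have tail3 : ∀ (u v : Fin 4 →₀ ℕ), ∀ j : Fin 4, (3:Fin 4) < j → u j = v j := by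
    intro u v j hj; exfalso; fin_cases j <;> exact absurd hj (by decide)
  have hGI : ({X 1 * X 2 - X 0 * X 3, X 0 * X 2 - X 1 * X 3, X 0 * X 1 - X 2 * X 3,
        X 1 ^ 2 * X 3 - X 2 ^ 2 * X 3, X 0 ^ 2 * X 3 - X 2 ^ 2 * X 3,
        X 2 ^ 3 * X 3 - X 2 * X 3 ^ 3} : Set (MvPolynomial (Fin 4) K)) ⊆
      ↑(Ideal.span ({X 0 * X 1 - X 2 * X 3, X 0 * X 2 - X 1 * X 3, X 1 * X 2 - X 0 * X 3}
        : Set (MvPolynomial (Fin 4) K))) := by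
    intro g hg
    simp only [Set.mem_insert_iff, Set.mem_singleton_iff] at hg
    rcases hg with rfl | rfl | rfl | rfl | rfl | rfl
    · exact Ideal.subset_span (by simp)
    · exact Ideal.subset_span (by simp)
    · exact Ideal.subset_span (by simp)
    · have e4 : (X 1 ^ 2 * X 3 - X 2 ^ 2 * X 3 : MvPolynomial (Fin 4) K)
          = X 2 * (X 0 * X 1 - X 2 * X 3) - X 1 * (X 0 * X 2 - X 1 * X 3) := by ring
      rw [e4]
      exact sub_mem (Ideal.mul_mem_left _ _ (Ideal.subset_span (by simp)))
        (Ideal.mul_mem_left _ _ (Ideal.subset_span (by simp)))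
    · have e5 : (X 0 ^ 2 * X 3 - X 2 ^ 2 * X 3 : MvPolynomial (Fin 4) K)
          = X 2 * (X 0 * X 1 - X 2 * X 3) - X 0 * (X 1 * X 2 - X 0 * X 3) := by ring
      rw [e5]
      exact sub_mem (Ideal.mul_mem_left _ _ (Ideal.subset_span (by simp)))
        (Ideal.mul_mem_left _ _ (Ideal.subset_span (by simp)))
    · have e6 : (X 2 ^ 3 * X 3 - X 2 * X 3 ^ 3 : MvPolynomial (Fin 4) K)
          = (X 3 ^ 2 - X 2 ^ 2) * (X 0 * X 1 - X 2 * X 3)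
            + X 1 * X 2 * (X 0 * X 2 - X 1 * X 3) + X 1 * X 3 * (X 1 * X 2 - X 0 * X 3) := by
        ring
      rw [e6]
      exact add_mem (add_mem (Ideal.mul_mem_left _ _ (Ideal.subset_span (by simp)))
        (Ideal.mul_mem_left _ _ (Ideal.subset_span (by simp))))
        (Ideal.mul_mem_left _ _ (Ideal.subset_span (by simp)))
  refine ⟨hGI, le_antisymm (Ideal.span_le.mpr hGI) (Ideal.span_le.mpr ?_), ?_⟩
  · intro x hx
    simp only [Set.mem_insert_iff, Set.mem_singleton_iff] at hx
    rcases hx with rfl | rfl | rfl <;> exact Ideal.subset_span (by simp)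
  · intro f hf hf0 a ha
    by_cases hstd : std4 (a 0) (a 1) (a 2) (a 3)
    · exfalso
      have hpi : piNF f = 0 := piNF_span hf
      have hkey : ∀ m : Fin 4 →₀ ℕ, m ∈ f.support → m ≠ a → NF m ≠ a := by
        intro m hm hma
        have hlt : grevlexLT m a := ha.2 m hm hma
        by_cases hs : std4 (m 0) (m 1) (m 2) (m 3)
        · rw [NF_std hs]; exact hma
        · intro he
          have htr := grevlex_trans (NF_lt hs) hlt
          rw [he] at htr
          exact grevlex_irrefl a htr
      have hco : MvPolynomial.coeff a (piNF f) = MvPolynomial.coeff a f :=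
        piNF_coeff_eq f a hkey (NF_std hstd)
      rw [hpi, coeff_zero] at hco
      exact MvPolynomial.mem_support_iff.mp ha.1 hco.symm
    · unfold std4 at hstd
      have hsix : (1 ≤ a 1 ∧ 1 ≤ a 2) ∨ (1 ≤ a 0 ∧ 1 ≤ a 2) ∨ (1 ≤ a 0 ∧ 1 ≤ a 1) ∨
          (2 ≤ a 1 ∧ 1 ≤ a 3) ∨ (2 ≤ a 0 ∧ 1 ≤ a 3) ∨ (3 ≤ a 2 ∧ 1 ≤ a 3) := by omega
      rcases hsix with h | h | h | h | h | h
      · refine ⟨X 1 * X 2 - X 0 * X 3, by simp, ?_⟩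
        rw [XX 1 2, XX 0 3]
        have hne : (Finsupp.single (0:Fin 4) 1 + Finsupp.single 3 1 : Fin 4 →₀ ℕ)
            ≠ Finsupp.single 1 1 + Finsupp.single 2 1 := by
          intro hh
          have := congrArg (fun F : Fin 4 →₀ ℕ => F 0) hh
          simp [Finsupp.single_apply] at this
        refine ⟨binom_ne_zero _ _ hne, _, isLead_binomial _ _ hne
          (Or.inr ⟨by simp [totDeg_apply, Finsupp.single_apply],
            3, by simp [Finsupp.single_apply], tail3 _ _⟩), ?_⟩
        rw [Finsupp.le_def]
        intro i; fin_cases i <;> simp [Finsupp.single_apply] <;> omega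
      · refine ⟨X 0 * X 2 - X 1 * X 3, by simp, ?_⟩
        rw [XX 0 2, XX 1 3]
        have hne : (Finsupp.single (1:Fin 4) 1 + Finsupp.single 3 1 : Fin 4 →₀ ℕ)
            ≠ Finsupp.single 0 1 + Finsupp.single 2 1 := by
          intro hh
          have := congrArg (fun F : Fin 4 →₀ ℕ => F 0) hh
          simp [Finsupp.single_apply] at this
        refine ⟨binom_ne_zero _ _ hne, _, isLead_binomial _ _ hne
          (Or.inr ⟨by simp [totDeg_apply, Finsupp.single_apply],
            3, by simp [Finsupp.single_apply], tail3 _ _⟩), ?_⟩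
        rw [Finsupp.le_def]
        intro i; fin_cases i <;> simp [Finsupp.single_apply] <;> omega
      · refine ⟨X 0 * X 1 - X 2 * X 3, by simp, ?_⟩
        rw [XX 0 1, XX 2 3]
        have hne : (Finsupp.single (2:Fin 4) 1 + Finsupp.single 3 1 : Fin 4 →₀ ℕ)
            ≠ Finsupp.single 0 1 + Finsupp.single 1 1 := by
          intro hh
          have := congrArg (fun F : Fin 4 →₀ ℕ => F 0) hh
          simp [Finsupp.single_apply] at this
        refine ⟨binom_ne_zero _ _ hne, _, isLead_binomial _ _ hne
          (Or.inr ⟨by simp [totDeg_apply, Finsupp.single_apply],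
            3, by simp [Finsupp.single_apply], tail3 _ _⟩), ?_⟩
        rw [Finsupp.le_def]
        intro i; fin_cases i <;> simp [Finsupp.single_apply] <;> omega
      · refine ⟨X 1 ^ 2 * X 3 - X 2 ^ 2 * X 3, by simp, ?_⟩
        rw [show (X 1 ^ 2 * X 3 - X 2 ^ 2 * X 3 : MvPolynomial (Fin 4) K)
            = X 1 ^ 2 * X 3 ^ 1 - X 2 ^ 2 * X 3 ^ 1 by ring, XpXp 1 3, XpXp 2 3]
        have hne : (Finsupp.single (2:Fin 4) 2 + Finsupp.single 3 1 : Fin 4 →₀ ℕ)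
            ≠ Finsupp.single 1 2 + Finsupp.single 3 1 := by
          intro hh
          have := congrArg (fun F : Fin 4 →₀ ℕ => F 1) hh
          simp [Finsupp.single_apply] at this
        have tl : ∀ j : Fin 4, (2:Fin 4) < j →
            (Finsupp.single (2:Fin 4) 2 + Finsupp.single 3 1 : Fin 4 →₀ ℕ) j
              = (Finsupp.single (1:Fin 4) 2 + Finsupp.single 3 1 : Fin 4 →₀ ℕ) j := by
          intro j hj
          fin_cases j
          · exact absurd hj (by decide)
          · exact absurd hj (by decide)
          · exact absurd hj (by decide)
          · simp [Finsupp.single_apply]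
        refine ⟨binom_ne_zero _ _ hne, _, isLead_binomial _ _ hne
          (Or.inr ⟨by simp [totDeg_apply, Finsupp.single_apply],
            2, by simp [Finsupp.single_apply], tl⟩), ?_⟩
        rw [Finsupp.le_def]
        intro i; fin_cases i <;> simp [Finsupp.single_apply] <;> omega
      · refine ⟨X 0 ^ 2 * X 3 - X 2 ^ 2 * X 3, by simp, ?_⟩
        rw [show (X 0 ^ 2 * X 3 - X 2 ^ 2 * X 3 : MvPolynomial (Fin 4) K)
            = X 0 ^ 2 * X 3 ^ 1 - X 2 ^ 2 * X 3 ^ 1 by ring, XpXp 0 3, XpXp 2 3]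
        have hne : (Finsupp.single (2:Fin 4) 2 + Finsupp.single 3 1 : Fin 4 →₀ ℕ)
            ≠ Finsupp.single 0 2 + Finsupp.single 3 1 := by
          intro hh
          have := congrArg (fun F : Fin 4 →₀ ℕ => F 0) hh
          simp [Finsupp.single_apply] at this
        have tl : ∀ j : Fin 4, (2:Fin 4) < j →
            (Finsupp.single (2:Fin 4) 2 + Finsupp.single 3 1 : Fin 4 →₀ ℕ) j
              = (Finsupp.single (0:Fin 4) 2 + Finsupp.single 3 1 : Fin 4 →₀ ℕ) j := by
          intro j hj
          fin_cases j
          · exact absurd hj (by decide)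
          · exact absurd hj (by decide)
          · exact absurd hj (by decide)
          · simp [Finsupp.single_apply]
        refine ⟨binom_ne_zero _ _ hne, _, isLead_binomial _ _ hne
          (Or.inr ⟨by simp [totDeg_apply, Finsupp.single_apply],
            2, by simp [Finsupp.single_apply], tl⟩), ?_⟩
        rw [Finsupp.le_def]
        intro i; fin_cases i <;> simp [Finsupp.single_apply] <;> omega
      · refine ⟨X 2 ^ 3 * X 3 - X 2 * X 3 ^ 3, by simp, ?_⟩
        rw [show (X 2 ^ 3 * X 3 - X 2 * X 3 ^ 3 : MvPolynomial (Fin 4) K)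
            = X 2 ^ 3 * X 3 ^ 1 - X 2 ^ 1 * X 3 ^ 3 by ring, XpXp 2 3, XpXp 2 3]
        have hne : (Finsupp.single (2:Fin 4) 1 + Finsupp.single 3 3 : Fin 4 →₀ ℕ)
            ≠ Finsupp.single 2 3 + Finsupp.single 3 1 := by
          intro hh
          have := congrArg (fun F : Fin 4 →₀ ℕ => F 2) hh
          simp [Finsupp.single_apply] at this
        refine ⟨binom_ne_zero _ _ hne, _, isLead_binomial _ _ hne
          (Or.inr ⟨by simp [totDeg_apply, Finsupp.single_apply],
            3, by simp [Finsupp.single_apply], tail3 _ _⟩), ?_⟩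
        rw [Finsupp.le_def]
        intro i; fin_cases i <;> simp [Finsupp.single_apply] <;> omega
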